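/- Let m ≥ 3, n ≥ 3, and suppose some C ∈ C'_{m,n} satisfies C∩I_n = S_n and C∩I_{n−1} = T_{n−1}, where no connected component of the subgraph of C_m×P_n induced by S_n is a component of the subgraph induced by S_n∪T_{n−1} and the subgraph induced by S_n∪T_{n−1} has strictly fewer components than the subgraph induced by T_{n−1}. Let X be a nonempty subset of I_{n−2} with X∩T_{n−2} ≠ ∅, where T_{n−2} = {v_{i,n−2} : v_{i,n−1} ∈ T_{n−1}}. If some connected component of the subgraph of C_m×P_n induced by S_n∪T_{n−1} is also a connected component of the subgraph induced by S_n∪T_{n−1}∪X, then N'(K_m×P_n; S_n∪T_{n−1}∪X) = N(K_m×P_{n−2}; X) = f_{m,n−2}^{|X|}. -/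

import Mathlib

open SimpleGraph Finset
open scoped Classical

/-- A connected set of a graph: a nonempty vertex subset inducing a connected subgraph. -/
def IsConnSet {V : Type*} (G : SimpleGraph V) (C : Finset V) : Prop :=
  C.Nonempty ∧ (G.induce (C : Set V)).Connected

/-- `N(G)`: the number of connected sets of `G`. -/
noncomputable def numConnSets {V : Type*} (G : SimpleGraph V) : ℕ :=
  {C : Finset V | IsConnSet G C}.ncard

/-- The cycle `C_m` on `Fin m`, labelled as in the paper: `i` is adjacent to `i'` iff
`|i − i'| = 1` or `{i, i'} = {first, last}` (0-indexed: `{0, m−1}`). -/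
def cycleRow (m : ℕ) : SimpleGraph (Fin m) :=
  SimpleGraph.fromRel (fun i i' => i'.1 = i.1 + 1 ∨ (i.1 = 0 ∧ i'.1 = m - 1))

/-- `C_{m,n}`: the connected sets of `K_m×P_n` containing at least one vertex of each
column. -/
def Cmn (m n : ℕ) : Set (Finset (Fin m × Fin n)) :=
  {C | IsConnSet ((⊤ : SimpleGraph (Fin m)) □ pathGraph n) C ∧
       ∀ j : Fin n, (C.filter (fun p => p.2 = j)).Nonempty}

/-- `C'_{m,n}`: the vertex subsets that are connected sets of `K_m×P_n` but not
connected sets of `C_m×P_n` and contain at least one vertex of each column. -/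
def Cmn' (m n : ℕ) : Set (Finset (Fin m × Fin n)) :=
  {C | IsConnSet ((⊤ : SimpleGraph (Fin m)) □ pathGraph n) C ∧
       ¬ IsConnSet (cycleRow m □ pathGraph n) C ∧
       ∀ j : Fin n, (C.filter (fun p => p.2 = j)).Nonempty}

/-- `N(K_m×P_n; X)`: the number of `C ∈ C_{m,n}` with `C∩I_j = X∩I_j` for every
column `I_j` with `X∩I_j ≠ ∅`. -/
noncomputable def Ncount (m n : ℕ) (X : Finset (Fin m × Fin n)) : ℕ :=
  {C | C ∈ Cmn m n ∧ ∀ j : Fin n,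
      (X.filter (fun p => p.2 = j)).Nonempty →
      C.filter (fun p => p.2 = j) = X.filter (fun p => p.2 = j)}.ncard

/-- `N'(K_m×P_n; X)`: the number of `C ∈ C'_{m,n}` with `C∩I_j = X∩I_j` for every
column `I_j` with `X∩I_j ≠ ∅`. -/
noncomputable def N' (m n : ℕ) (X : Finset (Fin m × Fin n)) : ℕ :=
  {C | C ∈ Cmn' m n ∧ ∀ j : Fin n,
      (X.filter (fun p => p.2 = j)).Nonempty →
      C.filter (fun p => p.2 = j) = X.filter (fun p => p.2 = j)}.ncard

/-- `f_{m,n}^i`: the number of sets in `C_{m,n}` whose intersection with the last column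
equals the fixed `i`-element set `{v_{1,n},…,v_{i,n}}`. -/
noncomputable def fval (m n : ℕ) (hn : 0 < n) (i : ℕ) : ℕ :=
  {C : Finset (Fin m × Fin n) | C ∈ Cmn m n ∧
    C.filter (fun p => p.2 = (⟨n - 1, by omega⟩ : Fin n)) =
      (Finset.univ.filter (fun q : Fin m => q.1 < i)).image
        (fun q => (q, (⟨n - 1, by omega⟩ : Fin n)))}.ncard

/-- `R` is (the vertex set of) a connected component of the subgraph of `H` induced by
`S`: `R` is a nonempty subset of `S`, `H[R]` is connected, and there is no edge of `H`
between `R` and `S \ R`. -/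
def IsCompOf {W : Type*} (H : SimpleGraph W) (R S : Finset W) : Prop :=
  R ⊆ S ∧ R.Nonempty ∧ (H.induce (R : Set W)).Connected ∧
  ∀ x ∈ R, ∀ y ∈ S, y ∉ R → ¬ H.Adj x y

/-- `k(H[S])`: the number of connected components of the subgraph of `H` induced by `S`. -/
noncomputable def kcomp {W : Type*} (H : SimpleGraph W) (S : Finset W) : ℕ :=
  Nat.card (H.induce (S : Set W)).ConnectedComponent


section AuxST16
variable {V W : Type*}

/-- A clique induces a connected graph. -/
lemma aux_clique_connected (G : SimpleGraph V) (s : Set V) (hne : s.Nonempty)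
    (hcl : ∀ a ∈ s, ∀ b ∈ s, a ≠ b → G.Adj a b) : (G.induce s).Connected := by
  obtain ⟨v, hv⟩ := hne
  rw [connected_iff_exists_forall_reachable]
  refine ⟨⟨v, hv⟩, ?_⟩
  rintro ⟨w, hw⟩
  by_cases h : v = w
  · subst h; rfl
  · exact (Adj.reachable (by exact hcl v hv w hw h : (G.induce s).Adj ⟨v, hv⟩ ⟨w, hw⟩))

/-- A walk in an induced subgraph starting in a set `R` with no edges leaving `R`
stays in `R`. -/
lemma aux_walk_stays (H : SimpleGraph V) (S R : Set V)
    (hedge : ∀ x ∈ R, ∀ y ∈ S, y ∉ R → ¬ H.Adj x y) :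
    ∀ {a b : S} (_ : (H.induce S).Walk a b), (a : V) ∈ R → (b : V) ∈ R := by
  intro a b p
  induction p with
  | nil => exact id
  | @cons u w _ h _ ih =>
    intro hu
    refine ih ?_
    by_contra hw
    exact hedge u hu w w.2 hw h

lemma aux_not_connected (H : SimpleGraph V) (Cs R : Set V)
    (hedge : ∀ x ∈ R, ∀ y ∈ Cs, y ∉ R → ¬ H.Adj x y)
    {r y : V} (hr : r ∈ Cs) (hrR : r ∈ R) (hy : y ∈ Cs) (hyR : y ∉ R) :
    ¬ (H.induce Cs).Connected := by
  intro hconn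
  obtain ⟨p⟩ := hconn.preconnected ⟨r, hr⟩ ⟨y, hy⟩
  exact hyR (aux_walk_stays H Cs R hedge p hrR)

/-- Splitting off a "top" part `T` from a connected set: if all edges from `Cs \ T`
into `T` start in a clique `Y ⊆ Cs \ T`, then `Cs \ T` is still connected. -/
lemma aux_sdiff_connected (G : SimpleGraph V) (Cs T Y : Set V)
    (hY : Y ⊆ Cs \ T) (hYne : Y.Nonempty)
    (hcl : ∀ a ∈ Y, ∀ b ∈ Y, a ≠ b → G.Adj a b)
    (hbdry : ∀ x ∈ Cs \ T, ∀ u ∈ T, G.Adj x u → x ∈ Y)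
    (hC : (G.induce Cs).Connected) : (G.induce (Cs \ T)).Connected := by
  obtain ⟨y0, hy0⟩ := hYne
  have hy0' : y0 ∈ Cs \ T := hY hy0
  have claim : ∀ (a b : Cs) (_ : (G.induce Cs).Walk a b) (ha : (a : V) ∈ Cs \ T)
      (_ : (b : V) = y0), (G.induce (Cs \ T)).Reachable ⟨(a : V), ha⟩ ⟨y0, hy0'⟩ := by
    intro a b p
    induction p with
    | nil =>
      intro ha hb
      exact (Subtype.ext hb : (⟨_, ha⟩ : ↥(Cs \ T)) = ⟨y0, hy0'⟩) ▸ Reachable.refl _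
    | @cons u w _ h _ ih =>
      intro hu hb
      by_cases hwT : (w : V) ∈ T
      · -- u is on the boundary, hence in the clique Y
        have huY : (u : V) ∈ Y := hbdry u hu w hwT h
        by_cases heq : (u : V) = y0
        · exact (Subtype.ext heq : (⟨_, hu⟩ : ↥(Cs \ T)) = ⟨y0, hy0'⟩) ▸ Reachable.refl _
        · exact Adj.reachable (by exact hcl u huY y0 hy0 heq :
            (G.induce (Cs \ T)).Adj ⟨(u : V), hu⟩ ⟨y0, hy0'⟩)
      · have hw : (w : V) ∈ Cs \ T := ⟨w.2, hwT⟩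
        exact (Adj.reachable (by exact h : (G.induce (Cs \ T)).Adj ⟨(u:V), hu⟩ ⟨(w:V), hw⟩)).trans
          (ih hw hb)
  rw [connected_iff_exists_forall_reachable]
  refine ⟨⟨y0, hy0'⟩, ?_⟩
  rintro ⟨v, hv⟩
  obtain ⟨p⟩ := hC.preconnected ⟨v, hv.1⟩ ⟨y0, hy0'.1⟩
  exact (claim ⟨v, hv.1⟩ ⟨y0, hy0'.1⟩ p hv rfl).symm

/-- Transfer connectivity of an induced subgraph along an injective map that
preserves and reflects adjacency on the set. -/
lemma aux_image_connected_iff [DecidableEq W] (G : SimpleGraph V) (H : SimpleGraph W) (f : V → W)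
    (C : Finset V) (hinj : Set.InjOn f (C : Set V))
    (hadj : ∀ a ∈ C, ∀ b ∈ C, (G.Adj a b ↔ H.Adj (f a) (f b))) :
    (G.induce (C : Set V)).Connected ↔ (H.induce ((C.image f : Finset W) : Set W)).Connected := by
  have iso : (G.induce (C : Set V)) ≃g (H.induce ((C.image f : Finset W) : Set W)) := by
    refine ⟨(Equiv.Set.imageOfInjOn f (C : Set V) hinj).trans
      (Equiv.setCongr (by rw [Finset.coe_image])), ?_⟩
    rintro ⟨a, ha⟩ ⟨b, hb⟩
    show H.Adj (f a) (f b) ↔ G.Adj a b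
    exact (hadj a ha b hb).symm
  exact iso.connected_iff

/-- If a walk in the induced subgraph on `C` starts in the last column and ends
elsewhere, then some row occupies both of the last two columns of `C`. -/
lemma aux_exit {m n : ℕ} (C : Finset (Fin m × Fin n)) (hn : 2 ≤ n) :
    ∀ {a b : ((C : Set (Fin m × Fin n)))}
      (_ : (((⊤ : SimpleGraph (Fin m)) □ pathGraph n).induce (C : Set (Fin m × Fin n))).Walk a b),
      (a : Fin m × Fin n).2.1 = n - 1 → (b : Fin m × Fin n).2.1 ≠ n - 1 →
      ∃ q : Fin m, ((q, (⟨n - 1, by omega⟩ : Fin n)) ∈ C ∧ (q, (⟨n - 2, by omega⟩ : Fin n)) ∈ C) := by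
  intro a b p
  induction p with
  | nil => intro h1 h2; exact absurd h1 h2
  | @cons u w _ h p ih =>
    intro hu hb
    by_cases hw : (w : Fin m × Fin n).2.1 = n - 1
    · exact ih hw hb
    · have hadj : ((⊤ : SimpleGraph (Fin m)) □ pathGraph n).Adj ↑u ↑w := h
      rw [boxProd_adj] at hadj
      rcases hadj with ⟨_, hcol⟩ | ⟨hpath, hrow⟩
      · exact absurd (by rw [hcol] at hu; exact hu) hw
      · rw [pathGraph_adj] at hpath
        have hw2 : (w : Fin m × Fin n).2.1 = n - 2 := by omega
        refine ⟨(u : Fin m × Fin n).1, ?_, ?_⟩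
        · have he : ((u : Fin m × Fin n).1, (⟨n - 1, by omega⟩ : Fin n)) = (u : Fin m × Fin n) := by
            refine Prod.ext rfl (Fin.ext ?_)
            simp [hu]
          rw [he]
          exact u.2
        · have he : ((u : Fin m × Fin n).1, (⟨n - 2, by omega⟩ : Fin n)) = (w : Fin m × Fin n) := by
            refine Prod.ext hrow (Fin.ext ?_)
            simp [hw2]
          rw [he]
          exact w.2

lemma aux_adjK {m n : ℕ} {a b : Fin m × Fin n} :
    ((⊤ : SimpleGraph (Fin m)) □ pathGraph n).Adj a b ↔
      ((a.1 ≠ b.1 ∧ a.2 = b.2) ∨ (a.1 = b.1 ∧ (a.2.1 + 1 = b.2.1 ∨ b.2.1 + 1 = a.2.1))) := by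
  rw [boxProd_adj, pathGraph_adj]
  simp [and_comm]

lemma aux_adjC_col {m n : ℕ} {a b : Fin m × Fin n}
    (h : (cycleRow m □ pathGraph n).Adj a b) :
    a.2 = b.2 ∨ a.2.1 + 1 = b.2.1 ∨ b.2.1 + 1 = a.2.1 := by
  rcases boxProd_adj.mp h with ⟨_, h2⟩ | ⟨h2, _⟩
  · exact Or.inl h2
  · exact Or.inr (pathGraph_adj.mp h2)

lemma aux_filter_col_self {α β : Type*} [DecidableEq β] (S : Finset (α × β)) (c : β)
    (h : ∀ p ∈ S, p.2 = c) : S.filter (fun p => p.2 = c) = S :=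
  Finset.filter_true_of_mem h

lemma aux_filter_col_ne {α β : Type*} [DecidableEq β] (S : Finset (α × β)) {c j : β}
    (h : ∀ p ∈ S, p.2 = c) (hne : c ≠ j) : S.filter (fun p => p.2 = j) = ∅ :=
  Finset.filter_false_of_mem (fun p hp => by rw [h p hp]; exact hne)

end AuxST16

lemma aux_main1 (m n : ℕ) (hn : 3 ≤ n)
    (Sn Tn1 : Finset (Fin m × Fin n)) (X : Finset (Fin m)) (hX : X.Nonempty)
    (hSnpure : ∀ p ∈ Sn, p.2.1 = n - 1) (hTpure : ∀ p ∈ Tn1, p.2.1 = n - 2)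
    (hSnne : Sn.Nonempty) (hTne : Tn1.Nonempty)
    (q0 : Fin m) (hq0X : q0 ∈ X)
    (hq0T : ((q0, ⟨n - 2, by omega⟩) : Fin m × Fin n) ∈ Tn1)
    (q1 : Fin m) (hq1S : ((q1, ⟨n - 1, by omega⟩) : Fin m × Fin n) ∈ Sn)
    (hq1T : ((q1, ⟨n - 2, by omega⟩) : Fin m × Fin n) ∈ Tn1)
    (R : Finset (Fin m × Fin n)) (hRsub : R ⊆ Sn ∪ Tn1) (hRne : R.Nonempty)
    (hRedge : ∀ x ∈ R, ∀ y ∈ Sn ∪ Tn1 ∪ X.image (fun q => (q, (⟨n - 3, by omega⟩ : Fin n))),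
      y ∉ R → ¬ (cycleRow m □ pathGraph n).Adj x y) :
    N' m n (Sn ∪ Tn1 ∪ X.image (fun q => (q, (⟨n - 3, by omega⟩ : Fin n)))) =
      Ncount m (n - 2) (X.image (fun q => (q, (⟨n - 3, by omega⟩ : Fin (n - 2))))) := by
  classical
  have hle : n - 2 ≤ n := by omega
  have h1n : n - 1 < n := by omega
  have h2n : n - 2 < n := by omega
  have h3n : n - 3 < n := by omega
  have h3l : n - 3 < n - 2 := by omega
  set Y : Finset (Fin m × Fin n) := X.image (fun q => (q, ⟨n - 3, h3n⟩)) with hYdef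
  set Y' : Finset (Fin m × Fin (n - 2)) := X.image (fun q => (q, ⟨n - 3, h3l⟩)) with hY'def
  set emb : Fin m × Fin (n - 2) → Fin m × Fin n := fun p => (p.1, Fin.castLE hle p.2)
    with hembdef
  have hembval : ∀ p : Fin m × Fin (n - 2), (emb p).2.1 = p.2.1 := fun p => rfl
  have hv1 : ((⟨n - 1, h1n⟩ : Fin n)).1 = n - 1 := rfl
  have hv2 : ((⟨n - 2, h2n⟩ : Fin n)).1 = n - 2 := rfl
  have hv3 : ((⟨n - 3, h3n⟩ : Fin n)).1 = n - 3 := rfl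
  have hv3' : ((⟨n - 3, h3l⟩ : Fin (n - 2))).1 = n - 3 := rfl
  set Φ : Finset (Fin m × Fin (n - 2)) → Finset (Fin m × Fin n) :=
    fun D => D.image emb ∪ (Sn ∪ Tn1) with hΦdef
  -- column purity
  have hYpure : ∀ p ∈ Y, p.2 = (⟨n - 3, h3n⟩ : Fin n) := by
    intro p hp; obtain ⟨q, _, rfl⟩ := Finset.mem_image.mp hp; rfl
  have hY'pure : ∀ p ∈ Y', p.2 = (⟨n - 3, h3l⟩ : Fin (n - 2)) := by
    intro p hp; obtain ⟨q, _, rfl⟩ := Finset.mem_image.mp hp; rfl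
  have hSnP : ∀ p ∈ Sn, p.2 = (⟨n - 1, h1n⟩ : Fin n) := fun p hp => Fin.ext (hSnpure p hp)
  have hTnP : ∀ p ∈ Tn1, p.2 = (⟨n - 2, h2n⟩ : Fin n) := fun p hp => Fin.ext (hTpure p hp)
  have hYne : Y.Nonempty := hX.image _
  have hY'ne : Y'.Nonempty := hX.image _
  have hne12 : ((⟨n - 1, h1n⟩ : Fin n)) ≠ ⟨n - 2, h2n⟩ :=
    Fin.ne_of_val_ne (show n - 1 ≠ n - 2 by omega)
  have hne13 : ((⟨n - 1, h1n⟩ : Fin n)) ≠ ⟨n - 3, h3n⟩ :=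
    Fin.ne_of_val_ne (show n - 1 ≠ n - 3 by omega)
  have hne23 : ((⟨n - 2, h2n⟩ : Fin n)) ≠ ⟨n - 3, h3n⟩ :=
    Fin.ne_of_val_ne (show n - 2 ≠ n - 3 by omega)
  -- filters of the union
  have hZ1 : (Sn ∪ Tn1 ∪ Y).filter (fun p => p.2 = (⟨n - 1, h1n⟩ : Fin n)) = Sn := by
    rw [Finset.filter_union, Finset.filter_union, aux_filter_col_self _ _ hSnP,
      aux_filter_col_ne _ hTnP hne12.symm, aux_filter_col_ne _ hYpure hne13.symm]
    simp
  have hZ2 : (Sn ∪ Tn1 ∪ Y).filter (fun p => p.2 = (⟨n - 2, h2n⟩ : Fin n)) = Tn1 := by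
    rw [Finset.filter_union, Finset.filter_union, aux_filter_col_self _ _ hTnP,
      aux_filter_col_ne _ hSnP hne12, aux_filter_col_ne _ hYpure hne23.symm]
    simp
  have hZ3 : (Sn ∪ Tn1 ∪ Y).filter (fun p => p.2 = (⟨n - 3, h3n⟩ : Fin n)) = Y := by
    rw [Finset.filter_union, Finset.filter_union, aux_filter_col_self _ _ hYpure,
      aux_filter_col_ne _ hSnP hne13, aux_filter_col_ne _ hTnP hne23]
    simp
  have hZo : ∀ j : Fin n, j.1 ≠ n - 1 → j.1 ≠ n - 2 → j.1 ≠ n - 3 →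
      (Sn ∪ Tn1 ∪ Y).filter (fun p => p.2 = j) = ∅ := by
    intro j hj1 hj2 hj3
    rw [Finset.filter_union, Finset.filter_union,
      aux_filter_col_ne _ hSnP (fun h => hj1 (congrArg Fin.val h).symm),
      aux_filter_col_ne _ hTnP (fun h => hj2 (congrArg Fin.val h).symm),
      aux_filter_col_ne _ hYpure (fun h => hj3 (congrArg Fin.val h).symm)]
    simp
  have hAiff : ∀ C' : Finset (Fin m × Fin n),
      (∀ j : Fin n, ((Sn ∪ Tn1 ∪ Y).filter (fun p => p.2 = j)).Nonempty →
        C'.filter (fun p => p.2 = j) = (Sn ∪ Tn1 ∪ Y).filter (fun p => p.2 = j)) ↔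
      (C'.filter (fun p => p.2 = (⟨n - 1, h1n⟩ : Fin n)) = Sn ∧
       C'.filter (fun p => p.2 = (⟨n - 2, h2n⟩ : Fin n)) = Tn1 ∧
       C'.filter (fun p => p.2 = (⟨n - 3, h3n⟩ : Fin n)) = Y) := by
    intro C'
    constructor
    · intro h
      refine ⟨?_, ?_, ?_⟩
      · have h' := h _ (by rw [hZ1]; exact hSnne); rwa [hZ1] at h'
      · have h' := h _ (by rw [hZ2]; exact hTne); rwa [hZ2] at h'
      · have h' := h _ (by rw [hZ3]; exact hYne); rwa [hZ3] at h'
    · rintro ⟨e1, e2, e3⟩ j hne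
      by_cases hj1 : j.1 = n - 1
      · have hj : j = ⟨n - 1, h1n⟩ := Fin.ext hj1
        subst hj; rw [hZ1]; exact e1
      · by_cases hj2 : j.1 = n - 2
        · have hj : j = ⟨n - 2, h2n⟩ := Fin.ext hj2
          subst hj; rw [hZ2]; exact e2
        · by_cases hj3 : j.1 = n - 3
          · have hj : j = ⟨n - 3, h3n⟩ := Fin.ext hj3
            subst hj; rw [hZ3]; exact e3
          · rw [hZo j hj1 hj2 hj3] at hne
            exact absurd hne (by simp)
  have hY'self : Y'.filter (fun p => p.2 = (⟨n - 3, h3l⟩ : Fin (n - 2))) = Y' :=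
    aux_filter_col_self _ _ hY'pure
  have hBiff : ∀ D : Finset (Fin m × Fin (n - 2)),
      (∀ j : Fin (n - 2), (Y'.filter (fun p => p.2 = j)).Nonempty →
        D.filter (fun p => p.2 = j) = Y'.filter (fun p => p.2 = j)) ↔
      D.filter (fun p => p.2 = (⟨n - 3, h3l⟩ : Fin (n - 2))) = Y' := by
    intro D
    constructor
    · intro h
      have h' := h _ (by rw [hY'self]; exact hY'ne); rwa [hY'self] at h'
    · intro h j hne
      by_cases hj : j = ⟨n - 3, h3l⟩
      · subst hj; rw [hY'self, h]
      · rw [aux_filter_col_ne _ hY'pure (fun he => hj he.symm)] at hne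
        exact absurd hne (by simp)
  -- facts about emb
  have hembinj : Function.Injective emb := by
    intro p q h
    have h' : (p.1, Fin.castLE hle p.2) = (q.1, Fin.castLE hle q.2) := h
    simp only [Prod.mk.injEq] at h'
    exact Prod.ext h'.1 (Fin.castLE_injective hle h'.2)
  have hembadj : ∀ a b : Fin m × Fin (n - 2),
      ((⊤ : SimpleGraph (Fin m)) □ pathGraph (n - 2)).Adj a b ↔
      ((⊤ : SimpleGraph (Fin m)) □ pathGraph n).Adj (emb a) (emb b) := by
    intro a b
    rw [aux_adjK, aux_adjK]
    simp [hembdef, Fin.ext_iff]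
  have hembpure : ∀ (D : Finset (Fin m × Fin (n - 2))), ∀ p ∈ D.image emb, p.2.1 ≤ n - 3 := by
    intro D p hp
    obtain ⟨q, hq, rfl⟩ := Finset.mem_image.mp hp
    have h2 := q.2.2
    have hv : (emb q).2.1 = q.2.1 := hembval q
    omega
  have hembfil : ∀ (D : Finset (Fin m × Fin (n - 2))) (j : Fin n) (j' : Fin (n - 2)),
      j.1 = j'.1 →
      (D.image emb).filter (fun p => p.2 = j) = (D.filter (fun p => p.2 = j')).image emb := by
    intro D j j' hjj
    ext p
    simp only [Finset.mem_filter, Finset.mem_image]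
    constructor
    · rintro ⟨⟨q, hq, rfl⟩, hcol⟩
      refine ⟨q, ⟨hq, ?_⟩, rfl⟩
      have hv := congrArg Fin.val hcol
      have hv2 : (emb q).2.1 = q.2.1 := hembval q
      exact Fin.ext (by omega)
    · rintro ⟨q, ⟨hq, hq2⟩, rfl⟩
      refine ⟨⟨q, hq, rfl⟩, ?_⟩
      have hv := congrArg Fin.val hq2
      have hv2 : (emb q).2.1 = q.2.1 := hembval q
      exact Fin.ext (by omega)
  -- cliques and the connected top part
  have hSnclq : ∀ a ∈ (Sn : Set (Fin m × Fin n)), ∀ b ∈ (Sn : Set (Fin m × Fin n)), a ≠ b →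
      ((⊤ : SimpleGraph (Fin m)) □ pathGraph n).Adj a b := by
    intro a ha b hb hab
    rw [aux_adjK]
    have h2 : a.2 = b.2 := by
      rw [hSnP a (Finset.mem_coe.mp ha), hSnP b (Finset.mem_coe.mp hb)]
    exact Or.inl ⟨fun h1 => hab (Prod.ext h1 h2), h2⟩
  have hTnclq : ∀ a ∈ (Tn1 : Set (Fin m × Fin n)), ∀ b ∈ (Tn1 : Set (Fin m × Fin n)), a ≠ b →
      ((⊤ : SimpleGraph (Fin m)) □ pathGraph n).Adj a b := by
    intro a ha b hb hab
    rw [aux_adjK]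
    have h2 : a.2 = b.2 := by
      rw [hTnP a (Finset.mem_coe.mp ha), hTnP b (Finset.mem_coe.mp hb)]
    exact Or.inl ⟨fun h1 => hab (Prod.ext h1 h2), h2⟩
  have hYclq : ∀ a ∈ (Y : Set (Fin m × Fin n)), ∀ b ∈ (Y : Set (Fin m × Fin n)), a ≠ b →
      ((⊤ : SimpleGraph (Fin m)) □ pathGraph n).Adj a b := by
    intro a ha b hb hab
    rw [aux_adjK]
    have h2 : a.2 = b.2 := by
      rw [hYpure a (Finset.mem_coe.mp ha), hYpure b (Finset.mem_coe.mp hb)]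
    exact Or.inl ⟨fun h1 => hab (Prod.ext h1 h2), h2⟩
  have hTopConn : (((⊤ : SimpleGraph (Fin m)) □ pathGraph n).induce
      ((Sn ∪ Tn1 : Finset (Fin m × Fin n)) : Set (Fin m × Fin n))).Connected := by
    rw [Finset.coe_union]
    refine SimpleGraph.connected_induce_union
      (aux_clique_connected _ _ ⟨_, Finset.mem_coe.mpr hq1S⟩ hSnclq).preconnected
      (aux_clique_connected _ _ ⟨_, Finset.mem_coe.mpr hq1T⟩ hTnclq).preconnected
      (Finset.mem_coe.mpr hq1S) (Finset.mem_coe.mpr hq1T) ?_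
    rw [aux_adjK]
    exact Or.inr ⟨rfl, Or.inr (show n - 2 + 1 = n - 1 by omega)⟩
  -- forward direction
  have forward : ∀ D : Finset (Fin m × Fin (n - 2)),
      D ∈ Cmn m (n - 2) → D.filter (fun p => p.2 = (⟨n - 3, h3l⟩ : Fin (n - 2))) = Y' →
      (Φ D ∈ Cmn' m n ∧
        (Φ D).filter (fun p => p.2 = (⟨n - 1, h1n⟩ : Fin n)) = Sn ∧
        (Φ D).filter (fun p => p.2 = (⟨n - 2, h2n⟩ : Fin n)) = Tn1 ∧
        (Φ D).filter (fun p => p.2 = (⟨n - 3, h3n⟩ : Fin n)) = Y) := by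
    intro D hD hDf
    simp only [Cmn, Set.mem_setOf_eq, IsConnSet] at hD
    obtain ⟨⟨hDne, hDconn⟩, hDcols⟩ := hD
    have hYemb : Y'.image emb = Y := by
      rw [hY'def, hYdef, Finset.image_image]
      rfl
    have hfil3emb : (D.image emb).filter (fun p => p.2 = (⟨n - 3, h3n⟩ : Fin n)) = Y := by
      rw [hembfil D _ (⟨n - 3, h3l⟩ : Fin (n - 2)) rfl, hDf, hYemb]
    have hembS : (D.image emb).filter (fun p => p.2 = (⟨n - 1, h1n⟩ : Fin n)) = ∅ :=
      Finset.filter_false_of_mem (fun p hp h => by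
        have h1 := hembpure D p hp
        have h2 := congrArg Fin.val h
        have h3 : ((⟨n - 1, h1n⟩ : Fin n)).1 = n - 1 := rfl
        omega)
    have hembT : (D.image emb).filter (fun p => p.2 = (⟨n - 2, h2n⟩ : Fin n)) = ∅ :=
      Finset.filter_false_of_mem (fun p hp h => by
        have h1 := hembpure D p hp
        have h2 := congrArg Fin.val h
        have h3 : ((⟨n - 2, h2n⟩ : Fin n)).1 = n - 2 := rfl
        omega)
    have hfil1 : (Φ D).filter (fun p => p.2 = (⟨n - 1, h1n⟩ : Fin n)) = Sn := by
      show (D.image emb ∪ (Sn ∪ Tn1)).filter _ = Sn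
      rw [Finset.filter_union, Finset.filter_union, aux_filter_col_self _ _ hSnP,
        aux_filter_col_ne _ hTnP hne12.symm, hembS]
      simp
    have hfil2 : (Φ D).filter (fun p => p.2 = (⟨n - 2, h2n⟩ : Fin n)) = Tn1 := by
      show (D.image emb ∪ (Sn ∪ Tn1)).filter _ = Tn1
      rw [Finset.filter_union, Finset.filter_union, aux_filter_col_self _ _ hTnP,
        aux_filter_col_ne _ hSnP hne12, hembT]
      simp
    have hfil3 : (Φ D).filter (fun p => p.2 = (⟨n - 3, h3n⟩ : Fin n)) = Y := by
      show (D.image emb ∪ (Sn ∪ Tn1)).filter _ = Y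
      rw [Finset.filter_union, Finset.filter_union, aux_filter_col_ne _ hSnP hne13,
        aux_filter_col_ne _ hTnP hne23, hfil3emb]
      simp
    -- the distinguished vertex joining lower part and top
    have hq0Y' : ((q0, ⟨n - 3, h3l⟩) : Fin m × Fin (n - 2)) ∈ Y' := by
      rw [hY'def]; exact Finset.mem_image_of_mem _ hq0X
    have hq0D : ((q0, ⟨n - 3, h3l⟩) : Fin m × Fin (n - 2)) ∈ D := by
      have := hq0Y'
      rw [← hDf] at this
      exact Finset.mem_of_mem_filter _ this
    have hq0emb : ((q0, ⟨n - 3, h3n⟩) : Fin m × Fin n) ∈ D.image emb :=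
      Finset.mem_image_of_mem emb hq0D
    refine ⟨?_, hfil1, hfil2, hfil3⟩
    simp only [Cmn', Set.mem_setOf_eq, IsConnSet]
    refine ⟨⟨?_, ?_⟩, ?_, ?_⟩
    · -- nonempty
      exact ⟨_, Finset.mem_union_left _ hq0emb⟩
    · -- connected in K_m x P_n
      show (((⊤ : SimpleGraph (Fin m)) □ pathGraph n).induce
        ((D.image emb ∪ (Sn ∪ Tn1) : Finset (Fin m × Fin n)) : Set (Fin m × Fin n))).Connected
      rw [Finset.coe_union]
      refine SimpleGraph.connected_induce_union
        ((aux_image_connected_iff _ _ emb D hembinj.injOn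
          (fun a _ b _ => hembadj a b)).mp hDconn).preconnected
        hTopConn.preconnected (Finset.mem_coe.mpr hq0emb)
        (Finset.mem_coe.mpr (Finset.mem_union_right _ hq0T)) ?_
      rw [aux_adjK]
      exact Or.inr ⟨rfl, Or.inl (show n - 3 + 1 = n - 2 by omega)⟩
    · -- not connected in C_m x P_n
      intro hcon
      obtain ⟨-, hconn⟩ := hcon
      have hedge : ∀ x ∈ (R : Set (Fin m × Fin n)), ∀ y ∈ ((Φ D : Finset (Fin m × Fin n)) :
          Set (Fin m × Fin n)), y ∉ (R : Set (Fin m × Fin n)) →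
          ¬ (cycleRow m □ pathGraph n).Adj x y := by
        intro x hx y hy hyR hadjxy
        by_cases hyZ : y ∈ Sn ∪ Tn1 ∪ Y
        · exact hRedge x (Finset.mem_coe.mp hx) y hyZ (fun hc => hyR hc) hadjxy
        · have hyD : y ∈ D.image emb := by
            rcases Finset.mem_union.mp (Finset.mem_coe.mp hy) with h | h
            · exact h
            · exact absurd (Finset.mem_union_left _ h) hyZ
          have hy3 : y.2.1 ≤ n - 3 := hembpure D y hyD
          have hy4 : y.2.1 ≠ n - 3 := by
            intro h
            apply hyZ
            have hyf : y ∈ (D.image emb).filter (fun p => p.2 = (⟨n - 3, h3n⟩ : Fin n)) :=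
              Finset.mem_filter.mpr ⟨hyD, Fin.ext h⟩
            rw [hfil3emb] at hyf
            exact Finset.mem_union_right _ hyf
          have hx2 : x.2.1 = n - 1 ∨ x.2.1 = n - 2 := by
            rcases Finset.mem_union.mp (hRsub (Finset.mem_coe.mp hx)) with h | h
            · exact Or.inl (hSnpure x h)
            · exact Or.inr (hTpure x h)
          rcases aux_adjC_col hadjxy with h | h | h
          · have := congrArg Fin.val h; omega
          · omega
          · omega
      obtain ⟨r, hr⟩ := hRne
      have hrΦ : r ∈ Φ D := Finset.mem_union_right _ (hRsub hr)
      have hyΦ : ((q0, ⟨n - 3, h3n⟩) : Fin m × Fin n) ∈ Φ D :=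
        Finset.mem_union_left _ hq0emb
      have hyNR : ((q0, ⟨n - 3, h3n⟩) : Fin m × Fin n) ∉ R := by
        intro hc
        rcases Finset.mem_union.mp (hRsub hc) with h | h
        · have := hSnpure _ h; simp at this; omega
        · have := hTpure _ h; simp at this; omega
      exact aux_not_connected (cycleRow m □ pathGraph n) (↑(Φ D)) (↑R) hedge
        (Finset.mem_coe.mpr hrΦ) (Finset.mem_coe.mpr hr)
        (Finset.mem_coe.mpr hyΦ) (fun hc => hyNR (Finset.mem_coe.mp hc)) hconn
    · -- all columns nonempty
      intro j
      by_cases hj1 : j.1 = n - 1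
      · have hj : j = ⟨n - 1, h1n⟩ := Fin.ext hj1
        subst hj; rw [hfil1]; exact hSnne
      · by_cases hj2 : j.1 = n - 2
        · have hj : j = ⟨n - 2, h2n⟩ := Fin.ext hj2
          subst hj; rw [hfil2]; exact hTne
        · have hj3 : j.1 ≤ n - 3 := by have := j.2; omega
          obtain ⟨p, hp⟩ := hDcols ⟨j.1, by omega⟩
          obtain ⟨hpD, hpc⟩ := Finset.mem_filter.mp hp
          refine ⟨emb p, Finset.mem_filter.mpr ⟨Finset.mem_union_left _
            (Finset.mem_image_of_mem emb hpD), ?_⟩⟩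
          have hv : p.2.1 = j.1 := by rw [hpc]
          have hv2 : (emb p).2.1 = p.2.1 := hembval p
          exact Fin.ext (by omega)
  -- backward direction
  have backward : ∀ C' : Finset (Fin m × Fin n), C' ∈ Cmn' m n →
      C'.filter (fun p => p.2 = (⟨n - 1, h1n⟩ : Fin n)) = Sn →
      C'.filter (fun p => p.2 = (⟨n - 2, h2n⟩ : Fin n)) = Tn1 →
      C'.filter (fun p => p.2 = (⟨n - 3, h3n⟩ : Fin n)) = Y →
      ∃ D : Finset (Fin m × Fin (n - 2)),
        (D ∈ Cmn m (n - 2) ∧ D.filter (fun p => p.2 = (⟨n - 3, h3l⟩ : Fin (n - 2))) = Y') ∧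
        Φ D = C' := by
    intro C' hC' e1 e2 e3
    simp only [Cmn', Set.mem_setOf_eq, IsConnSet] at hC'
    obtain ⟨⟨hCne, hCconn⟩, hCnc, hCcols⟩ := hC'
    set L : Finset (Fin m × Fin n) := C'.filter (fun p => p.2.1 ≤ n - 3) with hLdef
    set down : Fin m × Fin n → Fin m × Fin (n - 2) :=
      fun p => (p.1, ⟨min p.2.1 (n - 3), by omega⟩) with hdowndef
    have hLcol : ∀ p ∈ L, p.2.1 ≤ n - 3 := fun p hp => (Finset.mem_filter.mp hp).2
    have hLC : L ⊆ C' := Finset.filter_subset _ _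
    have hdownemb : ∀ p ∈ L, emb (down p) = p := by
      intro p hp
      have h := hLcol p hp
      refine Prod.ext rfl (Fin.ext ?_)
      show min p.2.1 (n - 3) = p.2.1
      omega
    have hYsub : Y ⊆ L := by
      intro p hp
      have hc := hYpure p hp
      refine Finset.mem_filter.mpr ⟨?_, ?_⟩
      · rw [← e3] at hp; exact Finset.mem_of_mem_filter _ hp
      · rw [hc]
    have hsplit : C' = L ∪ (Sn ∪ Tn1) := by
      ext p
      constructor
      · intro hp
        by_cases h3 : p.2.1 ≤ n - 3
        · exact Finset.mem_union_left _ (Finset.mem_filter.mpr ⟨hp, h3⟩)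
        · by_cases h2 : p.2.1 = n - 2
          · refine Finset.mem_union_right _ (Finset.mem_union_right _ ?_)
            rw [← e2]; exact Finset.mem_filter.mpr ⟨hp, Fin.ext h2⟩
          · have h1 : p.2.1 = n - 1 := by have := p.2.2; omega
            refine Finset.mem_union_right _ (Finset.mem_union_left _ ?_)
            rw [← e1]; exact Finset.mem_filter.mpr ⟨hp, Fin.ext h1⟩
      · intro hp
        rcases Finset.mem_union.mp hp with h | h
        · exact hLC h
        · rcases Finset.mem_union.mp h with h' | h'
          · rw [← e1] at h'; exact Finset.mem_of_mem_filter _ h'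
          · rw [← e2] at h'; exact Finset.mem_of_mem_filter _ h'
    have hLset : (L : Set (Fin m × Fin n)) =
        (C' : Set (Fin m × Fin n)) \ ((Sn ∪ Tn1 : Finset (Fin m × Fin n)) :
          Set (Fin m × Fin n)) := by
      ext p
      simp only [Finset.mem_coe, Set.mem_diff]
      constructor
      · intro hp
        refine ⟨hLC hp, ?_⟩
        intro hc
        have h3 := hLcol p hp
        rcases Finset.mem_union.mp hc with h | h
        · have := hSnpure p h; omega
        · have := hTpure p h; omega
      · rintro ⟨hpC, hpT⟩
        refine Finset.mem_filter.mpr ⟨hpC, ?_⟩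
        by_contra h3
        by_cases h2 : p.2.1 = n - 2
        · exact hpT (Finset.mem_union_right _ (by
            rw [← e2]; exact Finset.mem_filter.mpr ⟨hpC, Fin.ext h2⟩))
        · have h1 : p.2.1 = n - 1 := by have := p.2.2; omega
          exact hpT (Finset.mem_union_left _ (by
            rw [← e1]; exact Finset.mem_filter.mpr ⟨hpC, Fin.ext h1⟩))
    have hLconn : (((⊤ : SimpleGraph (Fin m)) □ pathGraph n).induce
        (L : Set (Fin m × Fin n))).Connected := by
      rw [hLset]
      refine aux_sdiff_connected _ _ _ (Y : Set (Fin m × Fin n)) ?_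
        (Finset.coe_nonempty.mpr hYne) hYclq ?_ hCconn
      · rw [← hLset]; exact Finset.coe_subset.mpr hYsub
      · intro x hx u hu hadjxu
        have hxL : x ∈ L := by
          rw [← Finset.mem_coe, hLset]; exact hx
        have hxcol : x.2.1 ≤ n - 3 := hLcol x hxL
        have hucol : u.2.1 = n - 1 ∨ u.2.1 = n - 2 := by
          rcases Finset.mem_union.mp (Finset.mem_coe.mp hu) with h | h
          · exact Or.inl (hSnpure u h)
          · exact Or.inr (hTpure u h)
        rw [aux_adjK] at hadjxu
        have hx3 : x.2.1 = n - 3 := by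
          rcases hadjxu with ⟨_, h2⟩ | ⟨_, h2⟩
          · have := congrArg Fin.val h2; omega
          · omega
        have hxf : x ∈ C'.filter (fun p => p.2 = (⟨n - 3, h3n⟩ : Fin n)) :=
          Finset.mem_filter.mpr ⟨hLC hxL, Fin.ext hx3⟩
        rw [e3] at hxf
        exact Finset.mem_coe.mpr hxf
    -- the reindexing map is injective and adjacency preserving on L
    have hdowninj : Set.InjOn down (L : Set (Fin m × Fin n)) := by
      intro p hp q hq h
      have h1 : (down p).1 = (down q).1 := congrArg Prod.fst h
      have h2 : (down p).2 = (down q).2 := congrArg Prod.snd h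
      have hv := congrArg Fin.val h2
      have ep : (down p).2.1 = min p.2.1 (n - 3) := rfl
      have eq' : (down q).2.1 = min q.2.1 (n - 3) := rfl
      have hp3 := hLcol p (Finset.mem_coe.mp hp)
      have hq3 := hLcol q (Finset.mem_coe.mp hq)
      exact Prod.ext (h1 : p.1 = q.1) (Fin.ext (by omega))
    have hdownadj : ∀ a ∈ L, ∀ b ∈ L,
        (((⊤ : SimpleGraph (Fin m)) □ pathGraph n).Adj a b ↔
         ((⊤ : SimpleGraph (Fin m)) □ pathGraph (n - 2)).Adj (down a) (down b)) := by
      intro a ha b hb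
      have ea : (down a).2.1 = min a.2.1 (n - 3) := rfl
      have eb : (down b).2.1 = min b.2.1 (n - 3) := rfl
      have ha3 := hLcol a ha
      have hb3 := hLcol b hb
      rw [aux_adjK, aux_adjK]
      constructor
      · rintro (⟨h1, h2⟩ | ⟨h1, h2⟩)
        · have hv := congrArg Fin.val h2
          exact Or.inl ⟨(h1 : (down a).1 ≠ (down b).1), Fin.ext (by omega)⟩
        · refine Or.inr ⟨(h1 : (down a).1 = (down b).1), ?_⟩
          rcases h2 with h2 | h2
          · exact Or.inl (by omega)
          · exact Or.inr (by omega)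
      · rintro (⟨h1, h2⟩ | ⟨h1, h2⟩)
        · have hv := congrArg Fin.val h2
          exact Or.inl ⟨(h1 : a.1 ≠ b.1), Fin.ext (by omega)⟩
        · refine Or.inr ⟨(h1 : a.1 = b.1), ?_⟩
          rcases h2 with h2 | h2
          · exact Or.inl (by omega)
          · exact Or.inr (by omega)
    refine ⟨L.image down, ⟨?_, ?_⟩, ?_⟩
    · -- membership in Cmn
      simp only [Cmn, Set.mem_setOf_eq, IsConnSet]
      refine ⟨⟨?_, ?_⟩, ?_⟩
      · obtain ⟨y, hy⟩ := hYne
        exact ⟨down y, Finset.mem_image_of_mem _ (hYsub hy)⟩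
      · exact (aux_image_connected_iff _ _ down L hdowninj hdownadj).mp hLconn
      · intro j'
        obtain ⟨p, hp⟩ := hCcols ⟨j'.1, by omega⟩
        obtain ⟨hpC, hpc⟩ := Finset.mem_filter.mp hp
        have hpv : p.2.1 = j'.1 := by rw [hpc]
        have hj2 := j'.2
        have hpL : p ∈ L := Finset.mem_filter.mpr ⟨hpC, by omega⟩
        refine ⟨down p, Finset.mem_filter.mpr ⟨Finset.mem_image_of_mem _ hpL, Fin.ext ?_⟩⟩
        have e : (down p).2.1 = min p.2.1 (n - 3) := rfl
        omega
    · -- the last-column condition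
      ext p'
      simp only [Finset.mem_filter, Finset.mem_image]
      constructor
      · rintro ⟨⟨p, hpL, rfl⟩, hcol⟩
        have hcv := congrArg Fin.val hcol
        have e : (down p).2.1 = min p.2.1 (n - 3) := rfl
        have hpcol : p.2.1 = n - 3 := by have := hLcol p hpL; omega
        have hpY : p ∈ Y := by
          rw [← e3]; exact Finset.mem_filter.mpr ⟨hLC hpL, Fin.ext hpcol⟩
        rw [hYdef] at hpY
        obtain ⟨q, hqX, hq⟩ := Finset.mem_image.mp hpY
        rw [hY'def]
        refine Finset.mem_image.mpr ⟨q, hqX, ?_⟩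
        rw [← hq]
        exact Prod.ext rfl (Fin.ext (Nat.min_self (n - 3)).symm)
      · intro hp'
        rw [hY'def] at hp'
        obtain ⟨q, hqX, rfl⟩ := Finset.mem_image.mp hp'
        have hqY : ((q, ⟨n - 3, h3n⟩) : Fin m × Fin n) ∈ Y := by
          rw [hYdef]; exact Finset.mem_image_of_mem _ hqX
        have hqL := hYsub hqY
        exact ⟨⟨(q, ⟨n - 3, h3n⟩), hqL, Prod.ext rfl (Fin.ext (Nat.min_self (n - 3)))⟩, rfl⟩
    · -- Φ recovers C'
      show (L.image down).image emb ∪ (Sn ∪ Tn1) = C'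
      rw [Finset.image_image]
      have hid : L.image (emb ∘ down) = L.image id :=
        Finset.image_congr (fun p hp => hdownemb p hp)
      rw [hid, Finset.image_id]
      exact hsplit.symm
  -- assemble
  have hseteq : {C' : Finset (Fin m × Fin n) | C' ∈ Cmn' m n ∧ ∀ j : Fin n,
      ((Sn ∪ Tn1 ∪ Y).filter (fun p => p.2 = j)).Nonempty →
      C'.filter (fun p => p.2 = j) = (Sn ∪ Tn1 ∪ Y).filter (fun p => p.2 = j)} =
      Φ '' {D : Finset (Fin m × Fin (n - 2)) | D ∈ Cmn m (n - 2) ∧ ∀ j : Fin (n - 2),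
        (Y'.filter (fun p => p.2 = j)).Nonempty →
        D.filter (fun p => p.2 = j) = Y'.filter (fun p => p.2 = j)} := by
    ext C'
    simp only [Set.mem_setOf_eq, Set.mem_image]
    constructor
    · rintro ⟨h1, h2⟩
      obtain ⟨hx1, hx2, hx3⟩ := (hAiff C').mp h2
      obtain ⟨D, ⟨hD1, hD2⟩, hD3⟩ := backward C' h1 hx1 hx2 hx3
      exact ⟨D, ⟨hD1, (hBiff D).mpr hD2⟩, hD3⟩
    · rintro ⟨D, ⟨hD1, hD2⟩, rfl⟩
      obtain ⟨hf0, hf1, hf2, hf3⟩ := forward D hD1 ((hBiff D).mp hD2)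
      exact ⟨hf0, (hAiff (Φ D)).mpr ⟨hf1, hf2, hf3⟩⟩
  have hrec : ∀ D : Finset (Fin m × Fin (n - 2)),
      (Φ D).filter (fun p => p.2.1 ≤ n - 3) = D.image emb := by
    intro D
    show (D.image emb ∪ (Sn ∪ Tn1)).filter _ = D.image emb
    rw [Finset.filter_union, Finset.filter_union,
      Finset.filter_true_of_mem (hembpure D),
      Finset.filter_false_of_mem (fun p hp => by have := hSnpure p hp; omega),
      Finset.filter_false_of_mem (fun p hp => by have := hTpure p hp; omega)]
    simp
  have hΦinj : Function.Injective Φ := by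
    intro D1 D2 h
    have h' : D1.image emb = D2.image emb := by rw [← hrec D1, ← hrec D2, h]
    exact Finset.image_injective hembinj h'
  show N' m n (Sn ∪ Tn1 ∪ Y) = Ncount m (n - 2) Y'
  unfold N' Ncount
  rw [hseteq, Set.ncard_image_of_injective _ hΦinj]

set_option maxHeartbeats 1000000 in
lemma aux_main2 (m n : ℕ) (hn : 0 < n) (X : Finset (Fin m)) (hX : X.Nonempty) :
    Ncount m n (X.image (fun q => (q, (⟨n - 1, by omega⟩ : Fin n)))) = fval m n hn X.card := by
  classical
  have hc : n - 1 < n := by omega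
  set c : Fin n := ⟨n - 1, hc⟩ with hcdef
  set k := X.card with hkdef
  have hk : k ≤ m := le_trans (Finset.card_le_univ X) (by simp)
  set T0 : Finset (Fin m) := Finset.univ.filter (fun q : Fin m => q.1 < k) with hT0def
  have hT0card : T0.card = k := by
    have himgval : T0.image Fin.val = Finset.range k := by
      ext a
      simp only [hT0def, Finset.mem_image, Finset.mem_filter, Finset.mem_univ, true_and,
        Finset.mem_range]
      constructor
      · rintro ⟨q, hq, rfl⟩; exact hq
      · intro ha; exact ⟨⟨a, by omega⟩, ha, rfl⟩
    calc T0.card = (T0.image Fin.val).card :=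
          (Finset.card_image_of_injective _ Fin.val_injective).symm
      _ = k := by rw [himgval, Finset.card_range]
  -- a permutation of the rows carrying `X` to `T0`
  have e1 : {x // x ∈ X} ≃ {x // x ∈ T0} :=
    Fintype.equivOfCardEq (by rw [Fintype.card_coe, Fintype.card_coe, hT0card])
  have e2 : {x // ¬ x ∈ X} ≃ {x // ¬ x ∈ T0} :=
    Fintype.equivOfCardEq (by
      rw [Fintype.card_subtype_compl, Fintype.card_subtype_compl,
        Fintype.card_coe, Fintype.card_coe, hT0card])
  set σ : Equiv.Perm (Fin m) := Equiv.subtypeCongr e1 e2 with hσdef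
  have hσmem : ∀ a ∈ X, σ a ∈ T0 := by
    intro a ha
    have hs : σ a = ↑(e1 ⟨a, ha⟩) := by
      simp [hσdef, Equiv.subtypeCongr, Equiv.sumCompl_symm_apply_of_pos ha]
    rw [hs]; exact (e1 ⟨a, ha⟩).2
  have himg : X.image σ = T0 := by
    apply Finset.eq_of_subset_of_card_le
    · exact Finset.image_subset_iff.mpr hσmem
    · rw [hT0card, Finset.card_image_of_injective _ σ.injective]
  -- the pushforward along a row permutation
  have step : ∀ (τ : Equiv.Perm (Fin m)) (X1 : Finset (Fin m)) (D : Finset (Fin m × Fin n)),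
      D ∈ Cmn m n → D.filter (fun p => p.2 = c) = X1.image (fun q => (q, c)) →
      (D.image (fun p => (τ p.1, p.2)) ∈ Cmn m n ∧
        (D.image (fun p => (τ p.1, p.2))).filter (fun p => p.2 = c) =
          (X1.image τ).image (fun q => (q, c))) := by
    intro τ X1 D hD hDf
    simp only [Cmn, Set.mem_setOf_eq, IsConnSet] at hD ⊢
    obtain ⟨⟨hDne, hDconn⟩, hDcols⟩ := hD
    have hfilt : ∀ j : Fin n, (D.image (fun p => (τ p.1, p.2))).filter (fun p => p.2 = j) =
        (D.filter (fun p => p.2 = j)).image (fun p => (τ p.1, p.2)) := by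
      intro j
      rw [Finset.filter_image]
    refine ⟨⟨⟨hDne.image _, ?_⟩, ?_⟩, ?_⟩
    · -- connectivity
      refine (aux_image_connected_iff _ _ (fun p => (τ p.1, p.2)) D ?_ ?_).mp hDconn
      · intro p _ q _ h
        have h' : (τ p.1, p.2) = (τ q.1, q.2) := h
        simp only [Prod.mk.injEq] at h'
        exact Prod.ext (τ.injective h'.1) h'.2
      · intro a _ b _
        rw [aux_adjK, aux_adjK]
        simp only [ne_eq, EmbeddingLike.apply_eq_iff_eq]
    · -- columns nonempty
      intro j
      rw [hfilt j]
      exact (hDcols j).image _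
    · rw [hfilt c, hDf, Finset.image_image, Finset.image_image]
      rfl
  -- characterisation of the Ncount condition
  have hpure : ∀ p ∈ X.image (fun q => (q, c)), p.2 = c := by
    intro p hp
    obtain ⟨q, _, rfl⟩ := Finset.mem_image.mp hp
    rfl
  have hfself : (X.image (fun q => (q, c))).filter (fun p => p.2 = c) =
      X.image (fun q => (q, c)) := aux_filter_col_self _ _ hpure
  have hBiff : ∀ D : Finset (Fin m × Fin n),
      (∀ j : Fin n, ((X.image (fun q => (q, c))).filter (fun p => p.2 = j)).Nonempty →
        D.filter (fun p => p.2 = j) = (X.image (fun q => (q, c))).filter (fun p => p.2 = j)) ↔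
      D.filter (fun p => p.2 = c) = X.image (fun q => (q, c)) := by
    intro D
    constructor
    · intro h
      have := h c (by rw [hfself]; exact hX.image _)
      rwa [hfself] at this
    · intro h j hne
      by_cases hj : j = c
      · subst hj; rw [hfself, h]
      · rw [aux_filter_col_ne _ hpure (fun he => hj he.symm)] at hne
        exact absurd hne (by simp)
  have goal1 : {D : Finset (Fin m × Fin n) | D ∈ Cmn m n ∧ ∀ j : Fin n,
      ((X.image (fun q => (q, c))).filter (fun p => p.2 = j)).Nonempty →
      D.filter (fun p => p.2 = j) = (X.image (fun q => (q, c))).filter (fun p => p.2 = j)}.ncard =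
      {D : Finset (Fin m × Fin n) | D ∈ Cmn m n ∧
        D.filter (fun p => p.2 = c) = T0.image (fun q => (q, c))}.ncard := by
    have hseteq : {D : Finset (Fin m × Fin n) | D ∈ Cmn m n ∧
        D.filter (fun p => p.2 = c) = T0.image (fun q => (q, c))} =
        (fun D : Finset (Fin m × Fin n) => D.image (fun p => (σ p.1, p.2))) ''
          {D : Finset (Fin m × Fin n) | D ∈ Cmn m n ∧
            D.filter (fun p => p.2 = c) = X.image (fun q => (q, c))} := by
      ext E
      simp only [Set.mem_setOf_eq, Set.mem_image]
      constructor
      · rintro ⟨hE1, hE2⟩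
        refine ⟨E.image (fun p => (σ.symm p.1, p.2)), ?_, ?_⟩
        · have hst := step σ.symm T0 E hE1 hE2
          have h3 : T0.image σ.symm = X := by
            rw [← himg, Finset.image_image]
            simp
          rw [h3] at hst
          exact hst
        · rw [Finset.image_image]
          have hid : ((fun p : Fin m × Fin n => (σ p.1, p.2)) ∘
              (fun p : Fin m × Fin n => (σ.symm p.1, p.2))) = id := by
            funext p; simp
          rw [hid, Finset.image_id]
      · rintro ⟨D, ⟨hD1, hD2⟩, rfl⟩
        have hst := step σ X D hD1 hD2
        rwa [himg] at hst
    have hinjΨ : Function.Injective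
        (fun D : Finset (Fin m × Fin n) => D.image (fun p => (σ p.1, p.2))) := by
      apply Finset.image_injective
      intro p q h
      have h' : (σ p.1, p.2) = (σ q.1, q.2) := h
      simp only [Prod.mk.injEq] at h'
      exact Prod.ext (σ.injective h'.1) h'.2
    have hset2 : {D : Finset (Fin m × Fin n) | D ∈ Cmn m n ∧ ∀ j : Fin n,
        ((X.image (fun q => (q, c))).filter (fun p => p.2 = j)).Nonempty →
        D.filter (fun p => p.2 = j) = (X.image (fun q => (q, c))).filter (fun p => p.2 = j)} =
        {D : Finset (Fin m × Fin n) | D ∈ Cmn m n ∧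
          D.filter (fun p => p.2 = c) = X.image (fun q => (q, c))} :=
      Set.ext fun D => by
        simp only [Set.mem_setOf_eq]
        exact and_congr_right fun _ => hBiff D
    rw [hset2, hseteq, Set.ncard_image_of_injective _ hinjΨ]
  exact goal1

/-- Under the hypotheses of Statement 15, let `X` be a nonempty subset
of `I_{n−2}` with `X∩T_{n−2} ≠ ∅`. If some connected component of
`(C_m×P_n)[S_n ∪ T_{n−1}]` is also a connected component of
`(C_m×P_n)[S_n ∪ T_{n−1} ∪ X]`, then
`N'(K_m×P_n; S_n∪T_{n−1}∪X) = N(K_m×P_{n−2}; X) = f_{m,n−2}^{|X|}`. -/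
theorem statement16 (m n : ℕ) (hm : 3 ≤ m) (hn : 3 ≤ n)
    (C : Finset (Fin m × Fin n)) (hC : C ∈ Cmn' m n)
    (Sn Tn1 : Finset (Fin m × Fin n))
    (hSn : Sn = C.filter (fun p => p.2 = (⟨n - 1, by omega⟩ : Fin n)))
    (hTn1 : Tn1 = C.filter (fun p => p.2 = (⟨n - 2, by omega⟩ : Fin n)))
    (hcomp : ∀ R, IsCompOf (cycleRow m □ pathGraph n) R Sn →
      ¬ IsCompOf (cycleRow m □ pathGraph n) R (Sn ∪ Tn1))
    (hk : kcomp (cycleRow m □ pathGraph n) (Sn ∪ Tn1) <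
      kcomp (cycleRow m □ pathGraph n) Tn1)
    (X : Finset (Fin m)) (hX : X.Nonempty)
    (hXT : (X ∩ Tn1.image Prod.fst).Nonempty)
    (hcomp2 : ∃ R, IsCompOf (cycleRow m □ pathGraph n) R (Sn ∪ Tn1) ∧
      IsCompOf (cycleRow m □ pathGraph n) R
        (Sn ∪ Tn1 ∪ X.image (fun q => (q, (⟨n - 3, by omega⟩ : Fin n))))) :
    N' m n (Sn ∪ Tn1 ∪ X.image (fun q => (q, (⟨n - 3, by omega⟩ : Fin n)))) =
      Ncount m (n - 2) (X.image (fun q => (q, (⟨n - 3, by omega⟩ : Fin (n - 2))))) ∧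
    N' m n (Sn ∪ Tn1 ∪ X.image (fun q => (q, (⟨n - 3, by omega⟩ : Fin n)))) =
      fval m (n - 2) (by omega) X.card  := by
  classical
  obtain ⟨hCconn, hCnotc, hCcols⟩ := hC
  have hSnpure : ∀ p ∈ Sn, p.2.1 = n - 1 := by
    intro p hp; rw [hSn] at hp
    have h2 := (Finset.mem_filter.mp hp).2
    rw [h2]
  have hTpure : ∀ p ∈ Tn1, p.2.1 = n - 2 := by
    intro p hp; rw [hTn1] at hp
    have h2 := (Finset.mem_filter.mp hp).2
    rw [h2]
  have hSnne : Sn.Nonempty := by rw [hSn]; exact hCcols _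
  have hTne : Tn1.Nonempty := by rw [hTn1]; exact hCcols _
  obtain ⟨q0, hq0mem⟩ := hXT
  rw [Finset.mem_inter] at hq0mem
  obtain ⟨hq0X, hq0i⟩ := hq0mem
  obtain ⟨p0, hp0T, hp01⟩ := Finset.mem_image.mp hq0i
  have hq0T : ((q0, ⟨n - 2, by omega⟩) : Fin m × Fin n) ∈ Tn1 := by
    have he : p0 = ((q0, ⟨n - 2, by omega⟩) : Fin m × Fin n) :=
      Prod.ext hp01 (Fin.ext (hTpure p0 hp0T))
    rwa [he] at hp0T
  obtain ⟨u, hu⟩ := hSnne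
  have hSnne : Sn.Nonempty := ⟨u, hu⟩
  have huC : u ∈ C := by rw [hSn] at hu; exact Finset.mem_of_mem_filter u hu
  have hbC : ((q0, ⟨n - 2, by omega⟩) : Fin m × Fin n) ∈ C := by
    rw [hTn1] at hq0T; exact Finset.mem_of_mem_filter _ hq0T
  obtain ⟨wreach⟩ := hCconn.2.preconnected ⟨u, huC⟩
    ⟨((q0, ⟨n - 2, by omega⟩) : Fin m × Fin n), hbC⟩
  obtain ⟨q1, hq1C, hq1C'⟩ := aux_exit C (by omega) wreach (hSnpure u hu)
    (show n - 2 ≠ n - 1 by omega)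
  have hq1S : ((q1, ⟨n - 1, by omega⟩) : Fin m × Fin n) ∈ Sn := by
    rw [hSn]; exact Finset.mem_filter.mpr ⟨hq1C, rfl⟩
  have hq1T : ((q1, ⟨n - 2, by omega⟩) : Fin m × Fin n) ∈ Tn1 := by
    rw [hTn1]; exact Finset.mem_filter.mpr ⟨hq1C', rfl⟩
  obtain ⟨R, hR1, hR2⟩ := hcomp2
  have h1 := aux_main1 m n hn Sn Tn1 X hX hSnpure hTpure hSnne hTne q0 hq0X hq0T
    q1 hq1S hq1T R hR1.1 hR1.2.1 hR2.2.2.2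
  have h2 : Ncount m (n - 2) (X.image (fun q => (q, (⟨n - 3, by omega⟩ : Fin (n - 2))))) =
      fval m (n - 2) (by omega) X.card := by
    have e : (⟨n - 3, by omega⟩ : Fin (n - 2)) = ⟨n - 2 - 1, by omega⟩ := Fin.ext (show n - 3 = n - 2 - 1 by omega)
    rw [e]
    exact aux_main2 m (n - 2) (by omega) X hX
  exact ⟨h1, h1.trans h2⟩
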